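/- In the state space of a MAPT (a DAG), two coherent cuts cannot cross: if C1 and C2 are coherent cuts, s1, s1' ∈ C1, s2, s2' ∈ C2, and there is an evolution ω from s1 to s2 and an evolution ω' from s2' to s1', then C1 = C2 and both ω and ω' are empty. In particular, two distinct coherent cuts are disjoint. -/

import Mathlib

structure ATrans (Val Loc : Type) where
  src : Loc
  f : Val → Val
  lo : ℕ
  hi : ℕ
  dst : Loc

structure MState (n : ℕ) (Val Loc : Type) where
  loc : Fin n → Loc
  clock : Fin n → ℕ
  v : Val

structure GMAPT (n : ℕ) (Val Loc : Type) where
  trans : Fin n → Set (ATrans Val Loc)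
  initLoc : Fin n → Loc
  finalLoc : Fin n → Loc
  period : Fin n → ℕ
  period_pos : ∀ i, 0 < period i
  initState : MState n Val Loc


/-- Labels for state changes: transition firing, reset, or unit time increase. -/
inductive Ev (n : ℕ) (Val Loc : Type) where
  | tr (i : Fin n) (t : ATrans Val Loc)
  | rst (i : Fin n)
  | tick


variable {n : ℕ} {Val Loc : Type}


/-- A transition `t` of agent `i` is enabled at state `s`. -/
def TransEnabled (M : GMAPT n Val Loc) (i : Fin n) (t : ATrans Val Loc)
    (s : MState n Val Loc) : Prop :=
  t ∈ M.trans i ∧ s.loc i = t.src ∧ t.lo ≤ s.clock i ∧ s.clock i ≤ t.hi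

/-- Firing a transition updates the locality of agent `i` and the shared variable. -/
def fireTrans (i : Fin n) (t : ATrans Val Loc) (s : MState n Val Loc) : MState n Val Loc :=
  { loc := Function.update s.loc i t.dst, clock := s.clock, v := t.f s.v }

/-- The reset of agent `i` is enabled at `s`. -/
def ResetEnabled (M : GMAPT n Val Loc) (i : Fin n) (s : MState n Val Loc) : Prop :=
  s.loc i = M.finalLoc i ∧ s.clock i = M.period i

/-- Firing a reset sends agent `i` back to its initial locality with clock 0. -/
def fireReset (M : GMAPT n Val Loc) (i : Fin n) (s : MState n Val Loc) : MState n Val Loc :=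
  { loc := Function.update s.loc i (M.initLoc i),
    clock := Function.update s.clock i 0, v := s.v }

/-- Time may increase at `s`. -/
def TimeEnabled (M : GMAPT n Val Loc) (s : MState n Val Loc) : Prop :=
  ∀ i, (∃ t ∈ M.trans i, s.loc i = t.src ∧ s.clock i < t.hi) ∨
    (s.loc i = M.finalLoc i ∧ s.clock i < M.period i)

/-- A unit time increase. -/
def tickState (s : MState n Val Loc) : MState n Val Loc :=
  { loc := s.loc, clock := fun i => s.clock i + 1, v := s.v }

/-- One step of the (original) semantics of a G-MAPT. -/
inductive Step (M : GMAPT n Val Loc) : MState n Val Loc → MState n Val Loc → Prop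
  | trans (i : Fin n) (t : ATrans Val Loc) (s : MState n Val Loc) :
      TransEnabled M i t s → Step M s (fireTrans i t s)
  | reset (i : Fin n) (s : MState n Val Loc) :
      ResetEnabled M i s → Step M s (fireReset M i s)
  | time (s : MState n Val Loc) : TimeEnabled M s → Step M s (tickState s)

/-- A state is reachable if some sequence of steps leads to it from the initial state. -/
def Reachable (M : GMAPT n Val Loc) (s : MState n Val Loc) : Prop :=
  Relation.ReflTransGen (Step M) M.initState s


/-- Constraint 1 (strong liveness). -/
def StrongLiveness (M : GMAPT n Val Loc) : Prop :=
  (∀ i, M.initState.loc i = M.finalLoc i → M.initState.clock i ≤ M.period i) ∧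
  (∀ i, M.initState.loc i ≠ M.finalLoc i →
    ∃ t ∈ M.trans i, t.src = M.initState.loc i ∧ M.initState.clock i ≤ t.hi) ∧
  (∀ i, ∀ tin ∈ M.trans i, tin.dst ≠ M.initLoc i → tin.dst ≠ M.finalLoc i →
    ∀ tout ∈ M.trans i, tout.src = tin.dst → tin.hi ≤ tout.hi) ∧
  (∀ i, ∀ tin ∈ M.trans i, tin.dst = M.finalLoc i → tin.hi ≤ M.period i)

/-- Structural conditions: each agent's transitions form a DAG between a unique initial
  locality (no incoming transition) and a unique final one (no outgoing transition),
  every non-final locality having an outgoing transition. -/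
def WellFormed (M : GMAPT n Val Loc) : Prop :=
  (∀ i, ∀ t ∈ M.trans i, t.src ≠ M.finalLoc i) ∧
  (∀ i, ∀ t ∈ M.trans i, t.dst ≠ M.initLoc i) ∧
  (∀ i, ∀ t ∈ M.trans i, t.dst ≠ M.finalLoc i → ∃ t' ∈ M.trans i, t'.src = t.dst) ∧
  (∀ i, M.initLoc i ≠ M.finalLoc i → ∃ t ∈ M.trans i, t.src = M.initLoc i)


/-- A path of transitions of agent `i` from a locality to another. -/
def AgentPath (M : GMAPT n Val Loc) (i : Fin n) :
    List (ATrans Val Loc) → Loc → Loc → Prop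
  | [], l, l' => l = l'
  | t :: p, l, l' => t ∈ M.trans i ∧ t.src = l ∧ AgentPath M i p t.dst l'

/-- The transition graph of every agent is acyclic. -/
def AgentsAcyclic (M : GMAPT n Val Loc) : Prop :=
  ∀ i l p, p ≠ [] → ¬ AgentPath M i p l l

/-- Constraint 2 (acyclicity): `Val = W × X`, some agent increases the `X`-component
  on every path from its initial to its final locality, and no function ever
  decreases the `X`-component. -/
def XGrowth {W X : Type} [LinearOrder X] (M : GMAPT n (W × X) Loc) : Prop :=
  (∃ i, ∀ p, AgentPath M i p (M.initLoc i) (M.finalLoc i) →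
    ∃ t ∈ p, ∀ v : W × X, v.2 < (t.f v).2) ∧
  (∀ i, ∀ t ∈ M.trans i, ∀ v : W × X, v.2 ≤ (t.f v).2)


/-- A MAPT is a G-MAPT satisfying the strong-liveness and acyclicity constraints. -/
def IsMAPT {W X : Type} [LinearOrder X] (M : GMAPT n (W × X) Loc) : Prop :=
  StrongLiveness M ∧ WellFormed M ∧ AgentsAcyclic M ∧ XGrowth M


/-- One labelled step of the original semantics. -/
def EStep (M : GMAPT n Val Loc) :
    Ev n Val Loc → MState n Val Loc → MState n Val Loc → Prop
  | .tr i t, s, s' => TransEnabled M i t s ∧ s' = fireTrans i t s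
  | .rst i, s, s' => ResetEnabled M i s ∧ s' = fireReset M i s
  | .tick, s, s' => TimeEnabled M s ∧ s' = tickState s

/-- An evolution: a labelled path of the original semantics. -/
def Evolution (M : GMAPT n Val Loc) :
    List (Ev n Val Loc) → MState n Val Loc → MState n Val Loc → Prop
  | [], s, s' => s = s'
  | e :: w, s, s' => ∃ s₁, EStep M e s s₁ ∧ Evolution M w s₁ s'

def isTick : Ev n Val Loc → Bool
  | .tick => true
  | _ => false

/-- Δ(ω): total elapsed time of an evolution. -/
def timeLen (w : List (Ev n Val Loc)) : ℕ := (w.filter isTick).length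

/-- word(ω): the untimed projection of an evolution onto transitions and resets. -/
def wordOf (w : List (Ev n Val Loc)) : List (Ev n Val Loc) :=
  w.filter (fun e => ! isTick e)

/-- The number of resets of agent `i` in an evolution. -/
def resetCount (i : Fin n) (w : List (Ev n Val Loc)) : ℕ :=
  (w.filter (fun e => match e with | .rst j => decide (j = i) | _ => false)).length


/-- There is an evolution of `M` from `a` to `s`. -/
def EvReach (M : GMAPT n Val Loc) (a s : MState n Val Loc) : Prop :=
  ∃ w, Evolution M w a s

/-- Strict order of the state DAG: a nonempty evolution from `s` to `s'`. -/
def StrictBelow (M : GMAPT n Val Loc) (s s' : MState n Val Loc) : Prop :=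
  ∃ w, w ≠ [] ∧ Evolution M w s s'

/-- A coherent cut of the sub-DAG of states reachable from `a`: a maximal antichain all
  of whose states share locality and clock vectors and lie at equal time distance
  from `a`. -/
def IsCoherentCutFrom (M : GMAPT n Val Loc) (a : MState n Val Loc)
    (C : Set (MState n Val Loc)) : Prop :=
  (∀ s ∈ C, EvReach M a s) ∧
  (∀ s ∈ C, ∀ s' ∈ C, ¬ StrictBelow M s s') ∧
  (∀ s, EvReach M a s → s ∉ C → ∃ s' ∈ C, StrictBelow M s s' ∨ StrictBelow M s' s) ∧
  (∀ s ∈ C, ∀ s' ∈ C, s.loc = s'.loc ∧ s.clock = s'.clock) ∧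
  (∀ s ∈ C, ∀ s' ∈ C, ∀ w w', Evolution M w a s → Evolution M w' a s' →
    timeLen w = timeLen w')

/-- A coherent cut of the state space of `M`. -/
def IsCoherentCut (M : GMAPT n Val Loc) (C : Set (MState n Val Loc)) : Prop :=
  IsCoherentCutFrom M M.initState C


/-- Configuration: locality and clock vectors. -/
def Cfg (n : ℕ) (Loc : Type) := (Fin n → Loc) × (Fin n → ℕ)

/-- Effect of an untimed event on configurations. -/
def CStep (M : GMAPT n Val Loc) : Ev n Val Loc → Cfg n Loc → Cfg n Loc → Prop
  | .tr i t, c, c' => t ∈ M.trans i ∧ c.1 i = t.src ∧ t.lo ≤ c.2 i ∧ c.2 i ≤ t.hi ∧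
      c' = (Function.update c.1 i t.dst, c.2)
  | .rst i, c, c' => c.1 i = M.finalLoc i ∧ c.2 i = M.period i ∧
      c' = (Function.update c.1 i (M.initLoc i), Function.update c.2 i 0)
  | .tick, _, _ => False

def CPath (M : GMAPT n Val Loc) : List (Ev n Val Loc) → Cfg n Loc → Cfg n Loc → Prop
  | [], c, c' => c = c'
  | e :: w, c, c' => ∃ c₁, CStep M e c c₁ ∧ CPath M w c₁ c'

lemma evolution_cpath (M : GMAPT n Val Loc) :
    ∀ (w : List (Ev n Val Loc)) (s s' : MState n Val Loc),
    Evolution M w s s' → (∀ e ∈ w, isTick e = false) →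
    CPath M w (s.loc, s.clock) (s'.loc, s'.clock)
  | [], s, s', h, _ => by
      have h' : s = s' := h
      subst h'; rfl
  | e :: w, s, s', h, ht => by
      obtain ⟨s₁, he, hw⟩ := h
      refine ⟨(s₁.loc, s₁.clock), ?_,
        evolution_cpath M w s₁ s' hw (fun e' h' => ht e' (List.mem_cons_of_mem _ h'))⟩
      cases e with
      | tr i t =>
          obtain ⟨⟨h1, h2, h3, h4⟩, rfl⟩ := he
          exact ⟨h1, h2, h3, h4, rfl⟩
      | rst i =>
          obtain ⟨⟨h1, h2⟩, rfl⟩ := he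
          exact ⟨h1, h2, rfl⟩
      | tick => exact absurd (ht _ List.mem_cons_self) (by simp [isTick])

lemma cpath_append (M : GMAPT n Val Loc) :
    ∀ (w w' : List (Ev n Val Loc)) (c c' c'' : Cfg n Loc),
    CPath M w c c' → CPath M w' c' c'' → CPath M (w ++ w') c c''
  | [], w', c, c', c'', h, h' => by
      have h2 : c = c' := h
      subst h2; exact h'
  | e :: w, w', c, c', c'', h, h' => by
      obtain ⟨c₁, he, hw⟩ := h
      exact ⟨c₁, he, cpath_append M w w' c₁ c' c'' hw h'⟩

lemma cpath_clock (M : GMAPT n Val Loc) (i : Fin n) :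
    ∀ (w : List (Ev n Val Loc)) (c c' : Cfg n Loc), CPath M w c c' →
    c'.2 i ≤ c.2 i ∧ ((Ev.rst i : Ev n Val Loc) ∈ w → c'.2 i < c.2 i)
  | [], c, c', h => by
      have h2 : c = c' := h
      subst h2; simp
  | e :: w, c, c', h => by
      obtain ⟨c₁, he, hw⟩ := h
      obtain ⟨ih1, ih2⟩ := cpath_clock M i w c₁ c' hw
      cases e with
      | tr j t =>
          obtain ⟨_, _, _, _, rfl⟩ := he
          constructor
          · exact ih1
          · intro hm
            simp only [List.mem_cons] at hm
            rcases hm with hm | hm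
            · exact absurd hm (by simp)
            · exact ih2 hm
      | rst j =>
          obtain ⟨h1, h2, rfl⟩ := he
          by_cases hji : j = i
          · subst hji
            have hc : (Function.update c.2 j 0) j = 0 := by simp
            have hpos := M.period_pos j
            constructor
            · simp only [hc] at ih1 ⊢; omega
            · intro _; simp only [hc] at ih1; omega
          · have hc : (Function.update c.2 j 0) i = c.2 i :=
              Function.update_of_ne (fun h => hji h.symm) _ _
            constructor
            · simp only [hc] at ih1; exact ih1
            · intro hm
              simp only [List.mem_cons] at hm
              rcases hm with hm | hm
              · exact absurd hm (by simp [Ev.rst.injEq]; exact fun h => hji h.symm)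
              · simp only [hc] at ih2; exact ih2 hm
      | tick => exact absurd he (by simp [CStep])

/-- The transitions of agent `i` occurring in an event list. -/
def trsOf (i : Fin n) (w : List (Ev n Val Loc)) : List (ATrans Val Loc) :=
  w.filterMap (fun e => match e with
    | .tr j t => if j = i then some t else none
    | _ => none)

lemma cpath_agentPath (M : GMAPT n Val Loc) (i : Fin n) :
    ∀ (w : List (Ev n Val Loc)) (c c' : Cfg n Loc), CPath M w c c' →
    ((Ev.rst i : Ev n Val Loc) ∉ w) → AgentPath M i (trsOf i w) (c.1 i) (c'.1 i)
  | [], c, c', h, _ => by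
      have h2 : c = c' := h
      subst h2; rfl
  | e :: w, c, c', h, hr => by
      obtain ⟨c₁, he, hw⟩ := h
      have hr' : (Ev.rst i : Ev n Val Loc) ∉ w := fun hm => hr (List.mem_cons_of_mem _ hm)
      have ih := cpath_agentPath M i w c₁ c' hw hr'
      cases e with
      | tr j t =>
          obtain ⟨h1, h2, _, _, rfl⟩ := he
          by_cases hji : j = i
          · subst hji
            have : trsOf j (Ev.tr j t :: w) = t :: trsOf j w := by simp [trsOf]
            rw [this]
            refine ⟨h1, h2.symm, ?_⟩
            have ih' : AgentPath M j (trsOf j w) ((Function.update c.1 j t.dst) j) (c'.1 j) := ih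
            rwa [Function.update_self] at ih'
          · have : trsOf i (Ev.tr j t :: w) = trsOf i w := by simp [trsOf, hji]
            rw [this]
            have ih' : AgentPath M i (trsOf i w) ((Function.update c.1 j t.dst) i) (c'.1 i) := ih
            rwa [Function.update_of_ne (fun h => hji h.symm)] at ih'
      | rst j =>
          obtain ⟨h1, h2, rfl⟩ := he
          have hji : j ≠ i := by
            intro h; subst h; exact hr List.mem_cons_self
          have : trsOf i (Ev.rst j :: w) = trsOf i w := by simp [trsOf]
          rw [this]
          have ih' : AgentPath M i (trsOf i w) ((Function.update c.1 j (M.initLoc j)) i) (c'.1 i) := ih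
          rwa [Function.update_of_ne (fun h => hji h.symm)] at ih'
      | tick => exact absurd he (by simp [CStep])

lemma cpath_cycle_nil (M : GMAPT n Val Loc) (hA : AgentsAcyclic M)
    (w : List (Ev n Val Loc)) (c : Cfg n Loc) (h : CPath M w c c) : w = [] := by
  have hnr : ∀ i, (Ev.rst i : Ev n Val Loc) ∉ w := by
    intro i hmem
    have := (cpath_clock M i w c c h).2 hmem
    omega
  have htr : ∀ i, trsOf i w = [] := by
    intro i
    have hp := cpath_agentPath M i w c c h (hnr i)
    by_contra hne
    exact hA i (c.1 i) (trsOf i w) hne hp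
  cases w with
  | nil => rfl
  | cons e w' =>
      exfalso
      cases e with
      | tr i t =>
          have := htr i
          simp [trsOf] at this
      | rst i => exact hnr i List.mem_cons_self
      | tick =>
          obtain ⟨c₁, he, _⟩ := h
          exact he

lemma evolution_append (M : GMAPT n Val Loc) :
    ∀ (w w' : List (Ev n Val Loc)) (s s' s'' : MState n Val Loc),
    Evolution M w s s' → Evolution M w' s' s'' → Evolution M (w ++ w') s s''
  | [], w', s, s', s'', h, h' => by
      have h2 : s = s' := h
      subst h2; exact h'
  | e :: w, w', s, s', s'', h, h' => by
      obtain ⟨s₁, he, hw⟩ := h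
      exact ⟨s₁, he, evolution_append M w w' s₁ s' s'' hw h'⟩

lemma timeLen_append (w w' : List (Ev n Val Loc)) :
    timeLen (w ++ w') = timeLen w + timeLen w' := by
  simp [timeLen, List.filter_append]

/-- Key crossing lemma: two evolutions between states of two coherent cuts in
  opposite directions are both empty. -/
lemma crossEmpty (M : GMAPT n Val Loc) (hA : AgentsAcyclic M)
    (C1 C2 : Set (MState n Val Loc)) (h1 : IsCoherentCut M C1) (h2 : IsCoherentCut M C2)
    (a : MState n Val Loc) (ha : a ∈ C1) (b : MState n Val Loc) (hb : b ∈ C2)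
    (p : MState n Val Loc) (hp : p ∈ C2) (q : MState n Val Loc) (hq : q ∈ C1)
    (w w' : List (Ev n Val Loc)) (hw : Evolution M w a b) (hw' : Evolution M w' p q) :
    w = [] ∧ w' = [] := by
  obtain ⟨hr1, hanti1, hmax1, hcoh1, htime1⟩ := h1
  obtain ⟨hr2, hanti2, hmax2, hcoh2, htime2⟩ := h2
  obtain ⟨u1, hu1⟩ := hr1 a ha
  obtain ⟨u2, hu2⟩ := hr2 p hp
  have hb' := evolution_append M u1 w _ _ _ hu1 hw
  have hq' := evolution_append M u2 w' _ _ _ hu2 hw'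
  have e1 := htime2 b hb p hp (u1 ++ w) u2 hb' hu2
  have e2 := htime1 a ha q hq u1 (u2 ++ w') hu1 hq'
  rw [timeLen_append] at e1
  rw [timeLen_append] at e2
  have hw0 : timeLen w = 0 := by omega
  have hw'0 : timeLen w' = 0 := by omega
  have htf : ∀ e ∈ w, isTick e = false := by
    have := List.length_eq_zero_iff.1 hw0
    intro e hme
    have := List.filter_eq_nil_iff.1 this e hme
    simpa using this
  have htf' : ∀ e ∈ w', isTick e = false := by
    have := List.length_eq_zero_iff.1 hw'0
    intro e hme
    have := List.filter_eq_nil_iff.1 this e hme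
    simpa using this
  have cp1 := evolution_cpath M w a b hw htf
  have cp2 := evolution_cpath M w' p q hw' htf'
  obtain ⟨hl1, hc1⟩ := hcoh1 a ha q hq
  obtain ⟨hl2, hc2⟩ := hcoh2 b hb p hp
  rw [← hl2, ← hc2, ← hl1, ← hc1] at cp2
  have hcyc := cpath_append M w w' _ _ _ cp1 cp2
  have := cpath_cycle_nil M hA (w ++ w') _ hcyc
  exact List.append_eq_nil_iff.1 this

/-- coherent cuts do not cross, and distinct coherent cuts are disjoint. -/
theorem stmt7 {W X : Type} [LinearOrder X] (M : GMAPT n (W × X) Loc)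
    (hM : IsMAPT M) :
    (∀ C1 C2 : Set (MState n (W × X) Loc),
      IsCoherentCut M C1 → IsCoherentCut M C2 →
      ∀ s1 ∈ C1, ∀ s1' ∈ C1, ∀ s2 ∈ C2, ∀ s2' ∈ C2,
      ∀ w w', Evolution M w s1 s2 → Evolution M w' s2' s1' →
        C1 = C2 ∧ w = [] ∧ w' = []) ∧
    (∀ C1 C2 : Set (MState n (W × X) Loc),
      IsCoherentCut M C1 → IsCoherentCut M C2 → C1 ≠ C2 → Disjoint C1 C2) := by
  have hA : AgentsAcyclic M := hM.2.2.1
  have main : ∀ C1 C2 : Set (MState n (W × X) Loc),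
      IsCoherentCut M C1 → IsCoherentCut M C2 →
      ∀ s1 ∈ C1, ∀ s1' ∈ C1, ∀ s2 ∈ C2, ∀ s2' ∈ C2,
      ∀ w w', Evolution M w s1 s2 → Evolution M w' s2' s1' →
        C1 = C2 ∧ w = [] ∧ w' = [] := by
    intro C1 C2 h1 h2 s1 hs1 s1' hs1' s2 hs2 s2' hs2' w w' hw hw'
    obtain ⟨hwnil, hw'nil⟩ :=
      crossEmpty M hA C1 C2 h1 h2 s1 hs1 s2 hs2 s2' hs2' s1' hs1' w w' hw hw'
    subst hwnil; subst hw'nil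
    have hs12 : s1 = s2 := hw
    have hs21 : s2' = s1' := hw'
    refine ⟨?_, rfl, rfl⟩
    ext s
    constructor
    · intro hs
      by_contra hns
      obtain ⟨u, hu, hcase⟩ := h2.2.2.1 s (h1.1 s hs) hns
      rcases hcase with ⟨w'', hne, hev⟩ | ⟨w'', hne, hev⟩
      · exact hne (crossEmpty M hA C1 C2 h1 h2 s hs u hu s2' hs2' s1' hs1'
          w'' [] hev hw').1
      · exact hne (crossEmpty M hA C2 C1 h2 h1 u hu s hs s1 hs1 s2 hs2
          w'' [] hev hs12).1
    · intro hs
      by_contra hns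
      obtain ⟨u, hu, hcase⟩ := h1.2.2.1 s (h2.1 s hs) hns
      rcases hcase with ⟨w'', hne, hev⟩ | ⟨w'', hne, hev⟩
      · exact hne (crossEmpty M hA C2 C1 h2 h1 s hs u hu s1 hs1 s2 hs2
          w'' [] hev hs12).1
      · exact hne (crossEmpty M hA C1 C2 h1 h2 u hu s hs s2' hs2' s1' hs1'
          w'' [] hev hw').1
  refine ⟨main, ?_⟩
  intro C1 C2 h1 h2 hne
  by_contra hnd
  obtain ⟨s, hsa, hsb⟩ := Set.not_disjoint_iff.1 hnd
  exact hne (main C1 C2 h1 h2 s hsa s hsa s hsb s hsb [] [] rfl rfl).1
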